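/- Let d be a positive integer, let μ_d be the product measure on ℝ^d of d copies of the standard Gaussian measure N(0,1), let C = (c_{ij}) be a d×d real matrix with all entries nonnegative, and let n_1, …, n_d be nonnegative integers. Then ∫ ∏_{i=1}^d (∑_{j=1}^d c_{ij} z_j)^{2 n_i} dμ_d(z) ≥ ∑_{ℓ} [∏_{j=1}^d (2 L_j)!/(2^{L_j} L_j!)] · ∏_{i=1}^d [(2 n_i)!/∏_{j=1}^d (2 ℓ_{ij})!] · ∏_{j=1}^d c_{ij}^{2 ℓ_{ij}}, where the sum runs over all d×d arrays (ℓ_{ij}) of nonnegative integers with row sums ℓ_{i1} + ⋯ + ℓ_{id} = n_i for each i, and L_j = ℓ_{1j} + ⋯ + ℓ_{dj}. -/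

import Mathlib

open MeasureTheory ProbabilityTheory Finset

section GaussianMomentHelpers
open Real
open scoped ENNReal NNReal

lemma gaussianPDFReal_zero_one (x : ℝ) :
    gaussianPDFReal 0 1 x = (Real.sqrt (2 * Real.pi))⁻¹ * Real.exp (-(2⁻¹ : ℝ) * x ^ 2) := by
  rw [gaussianPDFReal]
  norm_num
  left
  ring_nf

lemma integral_gaussianReal_eq (g : ℝ → ℝ) :
    ∫ x, g x ∂(gaussianReal 0 1) = ∫ x, gaussianPDFReal 0 1 x * g x := by
  rw [gaussianReal_of_var_ne_zero 0 one_ne_zero]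
  have hmeas : Measurable fun x => (gaussianPDFReal 0 1 x).toNNReal :=
    (measurable_gaussianPDFReal 0 1).real_toNNReal
  have : gaussianPDF 0 1 = fun x => ((gaussianPDFReal 0 1 x).toNNReal : ℝ≥0∞) := rfl
  rw [this, integral_withDensity_eq_integral_smul hmeas]
  congr 1
  ext x
  simp [NNReal.smul_def, Real.coe_toNNReal _ (gaussianPDFReal_nonneg 0 1 x)]

lemma integrable_gaussianReal_iff (g : ℝ → ℝ) :
    Integrable g (gaussianReal 0 1) ↔ Integrable (fun x => gaussianPDFReal 0 1 x * g x) := by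
  rw [gaussianReal_of_var_ne_zero 0 one_ne_zero]
  have hmeas : Measurable fun x => (gaussianPDFReal 0 1 x).toNNReal :=
    (measurable_gaussianPDFReal 0 1).real_toNNReal
  have h : gaussianPDF 0 1 = fun x => ((gaussianPDFReal 0 1 x).toNNReal : ℝ≥0∞) := rfl
  rw [h]
  have h1 := integrable_withDensity_iff_integrable_smul hmeas (g := g)
    (μ := (MeasureTheory.volume : Measure ℝ))
  have h2 : Integrable (fun x => (gaussianPDFReal 0 1 x).toNNReal • g x)
      (MeasureTheory.volume : Measure ℝ) ↔
      Integrable (fun x => gaussianPDFReal 0 1 x * g x) := by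
    apply integrable_congr
    filter_upwards with x
    simp [NNReal.smul_def, Real.coe_toNNReal _ (gaussianPDFReal_nonneg 0 1 x)]
  exact h1.trans h2

lemma Gamma_nat_add_half' (m : ℕ) :
    Real.Gamma ((m : ℝ) + 1/2) = (2*m).factorial / (4^m * m.factorial) * Real.sqrt π := by
  induction m with
  | zero => simpa using Real.Gamma_one_half_eq
  | succ m ih =>
    have h : ((m+1 : ℕ) : ℝ) + 1/2 = ((m : ℝ) + 1/2) + 1 := by push_cast; ring
    rw [h, Real.Gamma_add_one (by positivity), ih]
    have h2 : (2*(m+1)) = (2*m+1) + 1 := by ring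
    rw [h2, Nat.factorial_succ, Nat.factorial_succ, Nat.factorial_succ]
    push_cast
    have h4 : (4:ℝ)^(m+1) = 4 * 4^m := by ring
    rw [h4]
    have hm : (m.factorial : ℝ) ≠ 0 := Nat.cast_ne_zero.mpr m.factorial_ne_zero
    field_simp
    ring

lemma raw_even (m : ℕ) :
    ∫ x : ℝ, x ^ (2*m) * Real.exp (-(2⁻¹:ℝ) * x^2)
      = 2^m * Real.sqrt 2 * Real.Gamma ((m:ℝ) + 1/2) := by
  have habs : ∀ x : ℝ, |x| ^ (2*m) * Real.exp (-(2⁻¹:ℝ) * |x|^2)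
      = x ^ (2*m) * Real.exp (-(2⁻¹:ℝ) * x^2) := by
    intro x
    rw [pow_mul, pow_mul, sq_abs]
  calc ∫ x : ℝ, x ^ (2*m) * Real.exp (-(2⁻¹:ℝ) * x^2)
      = ∫ x : ℝ, |x| ^ (2*m) * Real.exp (-(2⁻¹:ℝ) * |x|^2) := by
        congr 1; ext x; rw [habs]
    _ = 2 * ∫ x in Set.Ioi (0:ℝ), x ^ (2*m) * Real.exp (-(2⁻¹:ℝ) * x^2) :=
        integral_comp_abs (f := fun x => x ^ (2*m) * Real.exp (-(2⁻¹:ℝ) * x^2))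
    _ = 2 * ∫ x in Set.Ioi (0:ℝ), x ^ ((2*m : ℕ) : ℝ) * Real.exp (-(2⁻¹:ℝ) * x ^ (2:ℝ)) := by
        congr 1
        refine setIntegral_congr_fun measurableSet_Ioi (fun x hx => ?_)
        rw [Real.rpow_natCast, Real.rpow_two]
    _ = 2 * ((2⁻¹:ℝ) ^ (-(((2*m : ℕ) : ℝ) + 1) / 2) * (1 / 2) *
          Real.Gamma ((((2*m : ℕ) : ℝ) + 1) / 2)) := by
        rw [integral_rpow_mul_exp_neg_mul_rpow two_pos
          (lt_of_lt_of_le neg_one_lt_zero (Nat.cast_nonneg _)) (by norm_num)]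
    _ = 2^m * Real.sqrt 2 * Real.Gamma ((m:ℝ) + 1/2) := by
        have h1 : ((((2*m : ℕ) : ℝ) + 1) / 2) = (m:ℝ) + 1/2 := by push_cast; ring
        rw [h1]
        have h2 : ((2⁻¹:ℝ) ^ (-(((2*m : ℕ) : ℝ) + 1) / 2) : ℝ) = 2 ^ (((m:ℝ) + 1/2) : ℝ) := by
          rw [Real.inv_rpow (by norm_num), ← Real.rpow_neg (by norm_num), neg_div, neg_neg, h1]
        rw [h2]
        have h3 : (2:ℝ) ^ (((m:ℝ) + 1/2) : ℝ) = 2^m * Real.sqrt 2 := by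
          rw [Real.rpow_add two_pos, Real.rpow_natCast, Real.sqrt_eq_rpow]
        rw [h3]
        ring

lemma raw_odd (k : ℕ) (hk : Odd k) :
    ∫ x : ℝ, x ^ k * Real.exp (-(2⁻¹:ℝ) * x^2) = 0 := by
  have h := MeasureTheory.integral_neg_eq_self
    (fun x : ℝ => x ^ k * Real.exp (-(2⁻¹:ℝ) * x^2)) (volume : Measure ℝ)
  have h2 : ∀ x : ℝ, (-x) ^ k * Real.exp (-(2⁻¹:ℝ) * (-x)^2)
      = -(x ^ k * Real.exp (-(2⁻¹:ℝ) * x^2)) := by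
    intro x
    rw [hk.neg_pow, neg_sq, neg_mul]
  simp_rw [h2, integral_neg] at h
  linarith

lemma integrable_pow_gaussianPDF (k : ℕ) :
    Integrable (fun x : ℝ => gaussianPDFReal 0 1 x * x ^ k) := by
  have h : Integrable (fun x : ℝ => x ^ ((k:ℕ):ℝ) * Real.exp (-(2⁻¹:ℝ) * x^2)) :=
    integrable_rpow_mul_exp_neg_mul_sq (by norm_num)
      (lt_of_lt_of_le neg_one_lt_zero (Nat.cast_nonneg _))
  simp_rw [Real.rpow_natCast] at h
  exact (h.const_mul ((Real.sqrt (2 * Real.pi))⁻¹)).congr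
    (Filter.Eventually.of_forall fun x => by simp only []; rw [gaussianPDFReal_zero_one]; ring)

lemma gaussian_moment_even (m : ℕ) :
    ∫ x, x ^ (2*m) ∂(gaussianReal 0 1)
      = ((2*m).factorial : ℝ) / (2^m * (m.factorial : ℝ)) := by
  rw [integral_gaussianReal_eq]
  have : ∀ x : ℝ, gaussianPDFReal 0 1 x * x ^ (2*m)
      = (Real.sqrt (2 * Real.pi))⁻¹ * (x ^ (2*m) * Real.exp (-(2⁻¹:ℝ) * x^2)) := by
    intro x; rw [gaussianPDFReal_zero_one]; ring
  simp_rw [this]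
  rw [MeasureTheory.integral_const_mul, raw_even, Gamma_nat_add_half']
  rw [Real.sqrt_mul (by norm_num : (0:ℝ) ≤ 2)]
  have h2 : (0:ℝ) < Real.sqrt 2 := Real.sqrt_pos.mpr (by norm_num)
  have hpi : (0:ℝ) < Real.sqrt Real.pi := Real.sqrt_pos.mpr Real.pi_pos
  have h4 : (4:ℝ)^m = 2^m * 2^m := by rw [← mul_pow]; norm_num
  have hm : ((m.factorial : ℝ)) ≠ 0 := Nat.cast_ne_zero.mpr m.factorial_ne_zero
  field_simp
  rw [h4]
  ring

lemma gaussian_moment_nonneg (k : ℕ) :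
    0 ≤ ∫ x, x ^ k ∂(gaussianReal 0 1) := by
  rcases Nat.even_or_odd k with ⟨m, hm⟩ | hodd
  · rw [show k = 2*m by omega, gaussian_moment_even]
    positivity
  · rw [integral_gaussianReal_eq]
    have : ∀ x : ℝ, gaussianPDFReal 0 1 x * x ^ k
        = (Real.sqrt (2 * Real.pi))⁻¹ * (x ^ k * Real.exp (-(2⁻¹:ℝ) * x^2)) := by
      intro x; rw [gaussianPDFReal_zero_one]; ring
    simp_rw [this]
    rw [MeasureTheory.integral_const_mul, raw_odd k hodd, mul_zero]

lemma integrable_pow_gaussian (k : ℕ) :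
    Integrable (fun x : ℝ => x ^ k) (gaussianReal 0 1) :=
  (integrable_gaussianReal_iff _).mpr (integrable_pow_gaussianPDF k)

end GaussianMomentHelpers

/-- The lower bound (5) in the proof of Proposition 2: for a matrix `C` with
nonnegative entries, the integral `∫ ∏ᵢ (∑ⱼ cᵢⱼ zⱼ)^(2nᵢ) dμ_d(z)` is bounded below by
the sum, over all `d × d` arrays `ℓ` of nonnegative integers with row sums
`∑ⱼ ℓᵢⱼ = nᵢ`, of
`[∏ⱼ (2Lⱼ)!/(2^{Lⱼ} Lⱼ!)] ⬝ ∏ᵢ [(2nᵢ)!/∏ⱼ(2ℓᵢⱼ)!] ⬝ ∏ⱼ cᵢⱼ^(2ℓᵢⱼ)`,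
where `Lⱼ = ∑ᵢ ℓᵢⱼ`. -/
theorem gaussian_product_lower_bound
    (d : ℕ) (hd : 0 < d) (C : Matrix (Fin d) (Fin d) ℝ)
    (hC : ∀ i j, 0 ≤ C i j) (n : Fin d → ℕ) :
    (∫ z : Fin d → ℝ, ∏ i, (∑ j, C i j * z j) ^ (2 * n i)
        ∂(Measure.pi fun _ : Fin d => gaussianReal 0 1))
      ≥ ∑ ℓ ∈ Fintype.piFinset (fun i : Fin d => Finset.Nat.antidiagonalTuple d (n i)),
          (∏ j, (((2 * ∑ i, ℓ i j).factorial : ℝ) /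
              (2 ^ (∑ i, ℓ i j) * ((∑ i, ℓ i j).factorial : ℝ)))) *
            ∏ i, ((((2 * n i).factorial : ℝ) / ∏ j, ((2 * ℓ i j).factorial : ℝ)) *
              ∏ j, (C i j) ^ (2 * ℓ i j)) := by
  classical
  letI : MeasureSpace ℝ := ⟨gaussianReal 0 1⟩
  have hvol : (Measure.pi fun _ : Fin d => gaussianReal 0 1)
      = (volume : Measure (Fin d → ℝ)) := (MeasureTheory.volume_pi).symm
  set coeff : (Fin d → Fin d → ℕ) → ℝ := fun K =>
    (∏ i, (Nat.multinomial Finset.univ (K i) : ℝ)) * ∏ i, ∏ j, C i j ^ K i j with hcoeff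
  set g : ℕ → ℝ := fun k => ∫ x, x ^ k ∂(gaussianReal 0 1) with hg
  set KS : Finset (Fin d → Fin d → ℕ) :=
    Fintype.piFinset (fun i : Fin d => Finset.piAntidiag Finset.univ (2 * n i)) with hKS
  -- Step 1: pointwise expansion
  have expand : ∀ z : Fin d → ℝ,
      ∏ i, (∑ j, C i j * z j) ^ (2 * n i)
        = ∑ K ∈ KS, coeff K * ∏ j, z j ^ (∑ i, K i j) := by
    intro z
    have h1 : ∀ i : Fin d, (∑ j, C i j * z j) ^ (2 * n i)
        = ∑ k ∈ Finset.piAntidiag Finset.univ (2 * n i),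
            (Nat.multinomial Finset.univ k : ℝ) * ∏ j, (C i j * z j) ^ k j :=
      fun i => Finset.sum_pow_eq_sum_piAntidiag Finset.univ _ (2 * n i)
    simp_rw [h1]
    rw [Finset.prod_univ_sum]
    refine Finset.sum_congr rfl fun K hK => ?_
    rw [Finset.prod_mul_distrib, hcoeff, mul_assoc]
    congr 1
    calc ∏ i, ∏ j, (C i j * z j) ^ K i j
        = ∏ i, ((∏ j, C i j ^ K i j) * ∏ j, z j ^ K i j) := by
          refine Finset.prod_congr rfl fun i _ => ?_
          rw [← Finset.prod_mul_distrib]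
          exact Finset.prod_congr rfl fun j _ => mul_pow _ _ _
      _ = (∏ i, ∏ j, C i j ^ K i j) * ∏ i, ∏ j, z j ^ K i j := Finset.prod_mul_distrib
      _ = (∏ i, ∏ j, C i j ^ K i j) * ∏ j, z j ^ (∑ i, K i j) := by
          congr 1
          rw [Finset.prod_comm]
          exact Finset.prod_congr rfl fun j _ => Finset.prod_pow_eq_pow_sum ..
  -- Step 2: integrate term by term
  haveI : SigmaFinite (volume : Measure ℝ) :=
    inferInstanceAs (SigmaFinite (gaussianReal 0 1))
  have hprodint : ∀ S : Fin d → ℕ,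
      Integrable (fun z : Fin d → ℝ => ∏ j, z j ^ S j) (volume : Measure (Fin d → ℝ)) :=
    fun S => MeasureTheory.Integrable.fintype_prod_dep
      (f := fun j (x : ℝ) => x ^ S j) (fun j => integrable_pow_gaussian (S j))
  have step2 : (∫ z : Fin d → ℝ, ∏ i, (∑ j, C i j * z j) ^ (2 * n i)
        ∂(Measure.pi fun _ : Fin d => gaussianReal 0 1))
      = ∑ K ∈ KS, coeff K * ∏ j, g (∑ i, K i j) := by
    rw [hvol]
    calc (∫ z : Fin d → ℝ, ∏ i, (∑ j, C i j * z j) ^ (2 * n i))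
        = ∫ z : Fin d → ℝ, ∑ K ∈ KS, coeff K * ∏ j, z j ^ (∑ i, K i j) := by
          congr 1; funext z; exact expand z
      _ = ∑ K ∈ KS, ∫ z : Fin d → ℝ, coeff K * ∏ j, z j ^ (∑ i, K i j) :=
          integral_finset_sum KS (fun K _ => (hprodint _).const_mul _)
      _ = ∑ K ∈ KS, coeff K * ∏ j, g (∑ i, K i j) := by
          refine Finset.sum_congr rfl fun K _ => ?_
          rw [MeasureTheory.integral_const_mul]
          congr 1
          exact MeasureTheory.integral_fintype_prod_eq_prod (ι := Fin d)
            (fun j (x : ℝ) => x ^ (∑ i, K i j))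
  rw [step2]
  -- nonnegativity of each term
  have hterm_nonneg : ∀ K : Fin d → Fin d → ℕ, 0 ≤ coeff K * ∏ j, g (∑ i, K i j) := by
    intro K
    apply mul_nonneg
    · apply mul_nonneg
      · exact Finset.prod_nonneg fun i _ => Nat.cast_nonneg _
      · exact Finset.prod_nonneg fun i _ => Finset.prod_nonneg fun j _ =>
          pow_nonneg (hC i j) _
    · exact Finset.prod_nonneg fun j _ => gaussian_moment_nonneg _
  -- Step 3: restrict to even tuples
  set e : (Fin d → Fin d → ℕ) → (Fin d → Fin d → ℕ) := fun ℓ i j => 2 * ℓ i j with he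
  have himg : (Fintype.piFinset fun i : Fin d =>
      Finset.Nat.antidiagonalTuple d (n i)).image e ⊆ KS := by
    intro K hK
    rw [Finset.mem_image] at hK
    obtain ⟨ℓ, hℓ, rfl⟩ := hK
    rw [hKS, Fintype.mem_piFinset]
    intro i
    rw [Finset.mem_piAntidiag]
    rw [Fintype.mem_piFinset] at hℓ
    have := (Finset.Nat.mem_antidiagonalTuple).mp (hℓ i)
    constructor
    · rw [← Finset.mul_sum, this]
    · intro j _; exact Finset.mem_univ j
  have hinj : ∀ x ∈ (Fintype.piFinset fun i : Fin d =>
        Finset.Nat.antidiagonalTuple d (n i)), ∀ y ∈ (Fintype.piFinset fun i : Fin d =>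
        Finset.Nat.antidiagonalTuple d (n i)), e x = e y → x = y := by
    intro x _ y _ hxy
    funext i j
    have := congrFun (congrFun hxy i) j
    simpa [he] using this
  calc ∑ ℓ ∈ Fintype.piFinset (fun i : Fin d => Finset.Nat.antidiagonalTuple d (n i)),
          (∏ j, (((2 * ∑ i, ℓ i j).factorial : ℝ) /
              (2 ^ (∑ i, ℓ i j) * ((∑ i, ℓ i j).factorial : ℝ)))) *
            ∏ i, ((((2 * n i).factorial : ℝ) / ∏ j, ((2 * ℓ i j).factorial : ℝ)) *
              ∏ j, (C i j) ^ (2 * ℓ i j))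
      = ∑ ℓ ∈ Fintype.piFinset (fun i : Fin d => Finset.Nat.antidiagonalTuple d (n i)),
          coeff (e ℓ) * ∏ j, g (∑ i, e ℓ i j) := by
        refine Finset.sum_congr rfl fun ℓ hℓ => ?_
        rw [Fintype.mem_piFinset] at hℓ
        have hrow : ∀ i, ∑ j, ℓ i j = n i :=
          fun i => (Finset.Nat.mem_antidiagonalTuple).mp (hℓ i)
        simp only [he]
        have hS : ∀ j : Fin d, (∑ i, 2 * ℓ i j) = 2 * ∑ i, ℓ i j := fun j => by
          rw [← Finset.mul_sum]
        have hgj : ∀ j : Fin d, g (∑ i, 2 * ℓ i j)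
            = ((2 * ∑ i, ℓ i j).factorial : ℝ)
              / (2 ^ (∑ i, ℓ i j) * ((∑ i, ℓ i j).factorial : ℝ)) := by
          intro j
          rw [hS j, hg]
          exact gaussian_moment_even _
        have hmult : ∀ i : Fin d, ((Nat.multinomial Finset.univ (fun j => 2 * ℓ i j) : ℕ) : ℝ)
            = ((2 * n i).factorial : ℝ) / ∏ j, ((2 * ℓ i j).factorial : ℝ) := by
          intro i
          have hspec := Nat.multinomial_spec Finset.univ (fun j => 2 * ℓ i j)
          have hsum : (∑ j, 2 * ℓ i j) = 2 * n i := by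
            rw [← Finset.mul_sum, hrow i]
          rw [hsum] at hspec
          have hne : (∏ j, ((2 * ℓ i j).factorial : ℝ)) ≠ 0 :=
            Finset.prod_ne_zero_iff.mpr fun j _ =>
              Nat.cast_ne_zero.mpr (Nat.factorial_ne_zero _)
          rw [eq_div_iff hne, mul_comm]
          exact_mod_cast congrArg (fun k : ℕ => (k : ℝ)) hspec
        rw [hcoeff]
        simp only [hgj, hmult]
        rw [Finset.prod_mul_distrib]
        ring
    _ = ∑ K ∈ (Fintype.piFinset fun i : Fin d =>
          Finset.Nat.antidiagonalTuple d (n i)).image e,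
          coeff K * ∏ j, g (∑ i, K i j) := (Finset.sum_image (f := fun K => coeff K * ∏ j, g (∑ i, K i j)) hinj).symm
    _ ≤ ∑ K ∈ KS, coeff K * ∏ j, g (∑ i, K i j) :=
        Finset.sum_le_sum_of_subset_of_nonneg himg (fun K _ _ => hterm_nonneg K)
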